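/- Let S = ℕ ⋊ ℕ^× be the ax+b-monoid over the natural numbers, with multiplication (m,p)(n,q) = (m + pn, pq). An element (m, p) of S is noncore irreducible if and only if p is a prime number. -/

import Mathlib

/-- Multiplication of the ax+b-monoid `ℕ ⋊ ℕ^×`: `(m,p)(n,q) = (m + pn, pq)`. -/
def axbMul (p q : ℕ × ℕ+) : ℕ × ℕ+ := (p.1 + (p.2 : ℕ) * q.1, p.2 * q.2)

/-- The core of `ℕ ⋊ ℕ^×`, defined via nonempty intersections of principal right ideals. -/
def axbCore : Set (ℕ × ℕ+) :=
  {s | ∀ t : ℕ × ℕ+, ∃ u v : ℕ × ℕ+, axbMul s u = axbMul t v}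

lemma mem_axbCore_iff (s : ℕ × ℕ+) : s ∈ axbCore ↔ s.2 = 1 := by
  constructor
  · intro h
    obtain ⟨u, v, huv⟩ := h (s.1 + 1, s.2)
    have h1 : s.1 + (s.2 : ℕ) * u.1 = s.1 + 1 + (s.2 : ℕ) * v.1 := congrArg Prod.fst huv
    have hdvd : (s.2 : ℕ) ∣ 1 := by
      have h2 : (s.2 : ℕ) * u.1 - (s.2 : ℕ) * v.1 = 1 := by omega
      exact h2 ▸ Nat.dvd_sub (dvd_mul_right _ _) (dvd_mul_right _ _)
    have : (s.2 : ℕ) = 1 := Nat.eq_one_of_dvd_one hdvd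
    exact PNat.coe_eq_one_iff.mp this
  · intro h t
    refine ⟨(t.1 + (t.2 : ℕ) * s.1 - s.1, t.2), (s.1, 1), ?_⟩
    have hle : s.1 ≤ (t.2 : ℕ) * s.1 := Nat.le_mul_of_pos_left _ t.2.pos
    simp only [axbMul, h]
    refine Prod.ext ?_ ?_
    · simp only []
      push_cast
      omega
    · simp

theorem stmt19 (m : ℕ) (p : ℕ+) :
    ((m, p) ∉ axbCore ∧
      ∀ a ∈ axbCore, ∀ t r : ℕ × ℕ+,
        axbMul (m, p) a = axbMul t r → t ∈ axbCore ∨ r ∈ axbCore) ↔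
    Nat.Prime (p : ℕ) := by
  simp only [mem_axbCore_iff]
  constructor
  · rintro ⟨hp1, h⟩
    have hp1' : (p : ℕ) ≠ 1 := fun hh => hp1 (PNat.coe_eq_one_iff.mp hh)
    have hp2 : 2 ≤ (p : ℕ) := by have := p.pos; omega
    rw [Nat.prime_def]
    refine ⟨hp2, fun q hq => ?_⟩
    obtain ⟨k, hk⟩ := hq
    have hqk : 0 < q * k := hk ▸ p.pos
    have hqpos : 0 < q := Nat.pos_of_ne_zero fun h0 => by simp [h0] at hqk
    have hkpos : 0 < k := Nat.pos_of_ne_zero fun h0 => by simp [h0] at hqk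
    have := h (0, 1) rfl (m, ⟨q, hqpos⟩) (0, ⟨k, hkpos⟩) (by
      refine Prod.ext (by simp [axbMul]) ?_
      show p * 1 = (⟨q, hqpos⟩ : ℕ+) * (⟨k, hkpos⟩ : ℕ+)
      apply PNat.coe_injective
      show ((p * 1 : ℕ+) : ℕ) = ((⟨q, hqpos⟩ * ⟨k, hkpos⟩ : ℕ+) : ℕ)
      rw [PNat.mul_coe, PNat.one_coe, mul_one]
      exact hk)
    rcases this with h1 | h1
    · left
      have h2 : q = 1 := congrArg PNat.val h1
      exact h2
    · right
      have h2 : k = 1 := congrArg PNat.val h1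
      rw [h2, mul_one] at hk
      exact hk.symm
  · intro hp
    constructor
    · intro hh
      have : (p : ℕ) = 1 := by rw [hh]; rfl
      exact hp.ne_one this
    · rintro a ha t r heq
      have h2 : p * a.2 = t.2 * r.2 := congrArg Prod.snd heq
      rw [ha, mul_one] at h2
      have h2' : (p : ℕ) = (t.2 : ℕ) * (r.2 : ℕ) := by
        rw [h2]; push_cast; ring
      rcases (Nat.Prime.eq_one_or_self_of_dvd hp t.2 ⟨r.2, h2'⟩) with h1 | h1
      · left; exact PNat.coe_eq_one_iff.mp h1
      · right
        have hr : (r.2 : ℕ) = 1 := by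
          have hppos : 0 < (p : ℕ) := p.pos
          nlinarith [h2', h1]
        exact PNat.coe_eq_one_iff.mp hr
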